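/- Suppose the RIFS $\mathbb{I}$ consists of similarity maps on $\mathbb{R}^n$ satisfying the uniform open set condition: there is a nonempty open set $\mathcal{O}$ with $\bigcup_{j \in \mathcal{I}_i} S_{i,j}(\mathcal{O}) \subseteq \mathcal{O}$ disjointly for each $i$. Let $s_{\max} = \max_i s_i$, where $s_i$ solves $\sum_{j \in \mathcal{I}_i} \mathrm{Lip}(S_{i,j})^{s_i} = 1$. Then $\sup_{\omega \in \Omega} \mathcal{P}^{s_{\max}}(F_\omega) < \infty$; in particular $\dim_P F_\omega \leq s_{\max}$ for all $\omega$. -/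

import Mathlib

open Metric MeasureTheory Filter Set
open scoped ENNReal NNReal

/-- Packing pre-measure with respect to the gauge `G` (applied to the diameters `2r`
of the balls of a countable centred `δ`-packing), as `δ → 0`. -/
noncomputable def packingPre {K : Type*} [MetricSpace K] (G : ℝ → ℝ) (F : Set K) : ℝ≥0∞ :=
  ⨅ (δ : ℝ) (_ : 0 < δ),
    ⨆ (s : Set ℕ) (c : ℕ → K) (r : ℕ → ℝ)
      (_ : ∀ n ∈ s, c n ∈ F ∧ 0 < r n ∧ 2 * r n ≤ δ)
      (_ : s.PairwiseDisjoint fun n => Metric.closedBall (c n) (r n)),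
      ∑' n : s, ENNReal.ofReal (G (2 * r n))

/-- Packing measure with respect to the gauge `G`. -/
noncomputable def packingMeasure {K : Type*} [MetricSpace K] (G : ℝ → ℝ) (F : Set K) : ℝ≥0∞ :=
  ⨅ (E : ℕ → Set K) (_ : F ⊆ ⋃ n, E n), ∑' n, packingPre G (E n)

/-- Packing dimension, defined from the packing measures `𝒫^s`. -/
noncomputable def packingDim {K : Type*} [MetricSpace K] (F : Set K) : ℝ≥0∞ :=
  ⨆ (s : ℝ) (_ : 0 ≤ s) (_ : packingMeasure (fun t => t ^ s) F = ⊤), ENNReal.ofReal s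

/-- The level-`k` approximation of the random attractor: the union over all length-`k`
words `(i₁,…,i_k)` with `i_l ∈ 𝓘_{ω_l}` of `S_{ω₁,i₁} ∘ ⋯ ∘ S_{ω_k,i_k}(K₀)`. -/
def levelSets {X : Type*} {N : ℕ} (m : Fin N → ℕ) (S : ∀ i, Fin (m i) → X → X) (K₀ : Set X) :
    (ℕ → Fin N) → ℕ → Set X
  | _, 0 => K₀
  | ω, k+1 => ⋃ j : Fin (m (ω 0)), S (ω 0) j '' levelSets m S K₀ (fun n => ω (n+1)) k

/-- The random attractor `F_ω = ⋂_k ⋃_{i₁,…,i_k} S_{ω₁,i₁} ∘ ⋯ ∘ S_{ω_k,i_k}(K₀)`. -/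
def attractorOf {X : Type*} {N : ℕ} (m : Fin N → ℕ) (S : ∀ i, Fin (m i) → X → X)
    (K₀ : Set X) (ω : ℕ → Fin N) : Set X :=
  ⋂ k, levelSets m S K₀ ω k

/-- `φ` is a bi-Lipschitz contraction. -/
def IsBiLipContraction {K : Type*} [MetricSpace K] (φ : K → K) : Prop :=
  ∃ c C : ℝ, 0 < c ∧ C < 1 ∧
    ∀ x y, c * dist x y ≤ dist (φ x) (φ y) ∧ dist (φ x) (φ y) ≤ C * dist x y


set_option linter.unusedSectionVars false

namespace RIFSAux

variable {X : Type*} [MetricSpace X] {N : ℕ}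

/-- Cylinder set of a word. -/
def cyl (m : Fin N → ℕ) (S : ∀ i, Fin (m i) → X → X) (K₀ : Set X) :
    (ℕ → Fin N) → List ℕ → Set X
  | _, [] => K₀
  | ω, j :: w => if h : j < m (ω 0) then
      S (ω 0) ⟨j, h⟩ '' cyl m S K₀ (fun n => ω (n+1)) w else ∅

/-- Weight of a word. -/
noncomputable def wt (m : Fin N → ℕ) (ρ : ∀ i, Fin (m i) → ℝ) (s : Fin N → ℝ) :
    (ℕ → Fin N) → List ℕ → ℝ
  | _, [] => 1
  | ω, j :: w => (if h : j < m (ω 0) then ρ (ω 0) ⟨j, h⟩ ^ s (ω 0) else 0)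
      * wt m ρ s (fun n => ω (n+1)) w

/-- Contraction-ratio product of a word. -/
def prd (m : Fin N → ℕ) (ρ : ∀ i, Fin (m i) → ℝ) :
    (ℕ → Fin N) → List ℕ → ℝ
  | _, [] => 1
  | ω, j :: w => (if h : j < m (ω 0) then ρ (ω 0) ⟨j, h⟩ else 0)
      * prd m ρ (fun n => ω (n+1)) w

/-- Validity of a word. -/
def Valid (m : Fin N → ℕ) : (ℕ → Fin N) → List ℕ → Prop
  | _, [] => True
  | ω, j :: w => j < m (ω 0) ∧ Valid m (fun n => ω (n+1)) w

variable {m : Fin N → ℕ} {S : ∀ i, Fin (m i) → X → X} {K₀ : Set X}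
  {ρ : ∀ i, Fin (m i) → ℝ} {s : Fin N → ℝ}

lemma cyl_subset_K0 (hK₀inv : ∀ i j, S i j '' K₀ ⊆ K₀) :
    ∀ (w : List ℕ) (ω : ℕ → Fin N), cyl m S K₀ ω w ⊆ K₀ := by
  intro w
  induction w with
  | nil => intro ω; exact subset_rfl
  | cons j w ih =>
    intro ω
    simp only [cyl]
    split
    · exact (Set.image_mono (ih _)).trans (hK₀inv _ _)
    · exact empty_subset _

lemma cyl_append (hK₀inv : ∀ i j, S i j '' K₀ ⊆ K₀) :
    ∀ (v w : List ℕ) (ω : ℕ → Fin N), cyl m S K₀ ω (v ++ w) ⊆ cyl m S K₀ ω v := by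
  intro v
  induction v with
  | nil => intro w ω; exact cyl_subset_K0 hK₀inv _ _
  | cons j v ih =>
    intro w ω
    simp only [List.cons_append, cyl]
    split
    · exact Set.image_mono (ih _ _)
    · exact subset_rfl

lemma cyl_nonempty (hK₀ne : K₀.Nonempty) :
    ∀ (w : List ℕ) (ω : ℕ → Fin N), Valid m ω w → (cyl m S K₀ ω w).Nonempty := by
  intro w
  induction w with
  | nil => intro ω _; exact hK₀ne
  | cons j w ih =>
    intro ω hv
    simp only [cyl, dif_pos hv.1]
    exact (ih _ hv.2).image _

lemma mem_cyl_of_mem_levelSets :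
    ∀ (k : ℕ) (ω : ℕ → Fin N) (x : X), x ∈ levelSets m S K₀ ω k →
      ∃ w : List ℕ, w.length = k ∧ Valid m ω w ∧ x ∈ cyl m S K₀ ω w := by
  intro k
  induction k with
  | zero => intro ω x hx; exact ⟨[], rfl, trivial, hx⟩
  | succ k ih =>
    intro ω x hx
    simp only [levelSets, Set.mem_iUnion] at hx
    obtain ⟨j, y, hy, rfl⟩ := hx
    obtain ⟨w, hlen, hval, hmem⟩ := ih _ _ hy
    refine ⟨(j : ℕ) :: w, by simp [hlen], ⟨j.2, hval⟩, ?_⟩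
    simp only [cyl, dif_pos j.2]
    exact ⟨y, hmem, rfl⟩

lemma valid_take : ∀ (w : List ℕ) (ω : ℕ → Fin N), Valid m ω w →
    ∀ t, Valid m ω (w.take t) := by
  intro w
  induction w with
  | nil => intro ω _ t; simp [Valid]
  | cons j w ih =>
    intro ω hv t
    cases t with
    | zero => trivial
    | succ t => exact ⟨hv.1, ih _ hv.2 t⟩

lemma prd_pos (hρ : ∀ i j, 0 < ρ i j) :
    ∀ (w : List ℕ) (ω : ℕ → Fin N), Valid m ω w → 0 < prd m ρ ω w := by
  intro w
  induction w with
  | nil => intro ω _; simp only [prd]; norm_num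
  | cons j w ih =>
    intro ω hv
    simp only [prd, dif_pos hv.1]
    exact mul_pos (hρ _ _) (ih _ hv.2)

lemma prd_le_one (hρ : ∀ i j, 0 < ρ i j ∧ ρ i j < 1) :
    ∀ (w : List ℕ) (ω : ℕ → Fin N), Valid m ω w → prd m ρ ω w ≤ 1 := by
  intro w
  induction w with
  | nil => intro ω _; simp only [prd]; norm_num
  | cons j w ih =>
    intro ω hv
    simp only [prd, dif_pos hv.1]
    calc (ρ (ω 0) ⟨j, hv.1⟩) * prd m ρ (fun n => ω (n+1)) w
        ≤ 1 * 1 := mul_le_mul (hρ _ _).2.le (ih _ hv.2)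
          (prd_pos (fun i j => (hρ i j).1) _ _ hv.2).le zero_le_one
      _ = 1 := one_mul 1

lemma wt_nonneg (hρ : ∀ i j, 0 < ρ i j) :
    ∀ (w : List ℕ) (ω : ℕ → Fin N), 0 ≤ wt m ρ s ω w := by
  intro w
  induction w with
  | nil => intro ω; simp only [wt]; norm_num
  | cons j w ih =>
    intro ω
    simp only [wt]
    refine mul_nonneg ?_ (ih _)
    split
    · exact Real.rpow_nonneg (hρ _ _).le _
    · exact le_refl 0


lemma wt_ge_prd_rpow (hρ : ∀ i j, 0 < ρ i j ∧ ρ i j < 1) {u : ℝ} (hu : ∀ i, s i ≤ u) :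
    ∀ (w : List ℕ) (ω : ℕ → Fin N), Valid m ω w →
      prd m ρ ω w ^ u ≤ wt m ρ s ω w := by
  intro w
  induction w with
  | nil => intro ω _; simp only [prd, wt, Real.one_rpow, le_refl]
  | cons j w ih =>
    intro ω hv
    simp only [prd, wt, dif_pos hv.1]
    rw [Real.mul_rpow (hρ _ _).1.le (prd_pos (fun i j => (hρ i j).1) _ _ hv.2).le]
    refine mul_le_mul ?_ (ih _ hv.2)
      (Real.rpow_nonneg (prd_pos (fun i j => (hρ i j).1) _ _ hv.2).le _)
      (Real.rpow_nonneg (hρ _ _).1.le _)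
    exact Real.rpow_le_rpow_of_exponent_ge (hρ _ _).1 (hρ _ _).2.le (hu _)

lemma prd_take_succ {rmin : ℝ} (hr0 : 0 < rmin) (hr1 : rmin ≤ 1)
    (hrle : ∀ i j, rmin ≤ ρ i j) (hρ : ∀ i j, 0 < ρ i j) :
    ∀ (w : List ℕ) (ω : ℕ → Fin N), Valid m ω w → ∀ t,
      rmin * prd m ρ ω (w.take t) ≤ prd m ρ ω (w.take (t + 1)) := by
  intro w
  induction w with
  | nil =>
    intro ω _ t
    simp only [List.take_nil, prd]
    nlinarith
  | cons j w ih =>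
    intro ω hv t
    cases t with
    | zero =>
      simp only [List.take_zero, List.take_succ_cons, List.take_zero, prd, dif_pos hv.1,
        mul_one]
      exact hrle _ _
    | succ t =>
      simp only [List.take_succ_cons, prd, dif_pos hv.1]
      rw [mul_left_comm]
      exact mul_le_mul_of_nonneg_left (ih _ hv.2 t) (hρ _ _).le

lemma diam_cyl_le (hK₀c : IsCompact K₀) (hK₀inv : ∀ i j, S i j '' K₀ ⊆ K₀)
    (hρ : ∀ i j, 0 < ρ i j)
    (hsim : ∀ i j x y, dist (S i j x) (S i j y) = ρ i j * dist x y) :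
    ∀ (w : List ℕ) (ω : ℕ → Fin N), Valid m ω w →
      Metric.diam (cyl m S K₀ ω w) ≤ prd m ρ ω w * Metric.diam K₀ := by
  intro w
  induction w with
  | nil => intro ω _; simp [prd, cyl]
  | cons j w ih =>
    intro ω hv
    simp only [cyl, prd, dif_pos hv.1]
    have hbdd : Bornology.IsBounded (cyl m S K₀ (fun n => ω (n+1)) w) :=
      hK₀c.isBounded.subset (cyl_subset_K0 hK₀inv _ _)
    have h1 : Metric.diam (S (ω 0) ⟨j, hv.1⟩ '' cyl m S K₀ (fun n => ω (n+1)) w)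
        ≤ ρ (ω 0) ⟨j, hv.1⟩ * Metric.diam (cyl m S K₀ (fun n => ω (n+1)) w) := by
      apply Metric.diam_le_of_forall_dist_le
        (mul_nonneg (hρ _ _).le Metric.diam_nonneg)
      rintro _ ⟨x, hx, rfl⟩ _ ⟨y, hy, rfl⟩
      rw [hsim]
      exact mul_le_mul_of_nonneg_left (Metric.dist_le_diam_of_mem hbdd hx hy) (hρ _ _).le
    calc Metric.diam (S (ω 0) ⟨j, hv.1⟩ '' cyl m S K₀ (fun n => ω (n+1)) w)
        ≤ ρ (ω 0) ⟨j, hv.1⟩ * Metric.diam (cyl m S K₀ (fun n => ω (n+1)) w) := h1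
      _ ≤ ρ (ω 0) ⟨j, hv.1⟩ * (prd m ρ (fun n => ω (n+1)) w * Metric.diam K₀) :=
          mul_le_mul_of_nonneg_left (ih _ hv.2) (hρ _ _).le
      _ = ρ (ω 0) ⟨j, hv.1⟩ * prd m ρ (fun n => ω (n+1)) w * Metric.diam K₀ := by ring


lemma prd_le_pow {rmax : ℝ} (h0 : 0 ≤ rmax) (hrle : ∀ i j, ρ i j ≤ rmax)
    (hρ : ∀ i j, 0 < ρ i j) :
    ∀ (w : List ℕ) (ω : ℕ → Fin N), Valid m ω w → prd m ρ ω w ≤ rmax ^ w.length := by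
  intro w
  induction w with
  | nil => intro ω _; simp only [prd, List.length_nil, pow_zero, le_refl]
  | cons j w ih =>
    intro ω hv
    simp only [prd, dif_pos hv.1, List.length_cons, pow_succ]
    rw [mul_comm (rmax ^ w.length) rmax]
    exact mul_le_mul (hrle _ _) (ih _ hv.2) (prd_pos hρ _ _ hv.2).le h0

lemma antichain_sum (hρ : ∀ i j, 0 < ρ i j) (hs : ∀ i, ∑ j, ρ i j ^ s i = 1) :
    ∀ (L : ℕ) (ω : ℕ → Fin N) (A : Finset (List ℕ)),
      (∀ w ∈ A, w ≠ [] ∧ w.length ≤ L) →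
      (∀ w ∈ A, ∀ v ∈ A, w ≠ v → ¬ w <+: v) →
      ∑ w ∈ A, wt m ρ s ω w ≤ 1 := by
  intro L
  induction L with
  | zero =>
    intro ω A hA _
    have hAe : A = ∅ := by
      rw [Finset.eq_empty_iff_forall_notMem]
      intro w hw
      exact (hA w hw).1 (List.length_eq_zero_iff.mp (Nat.le_zero.mp (hA w hw).2))
    simp [hAe]
  | succ L ih =>
    intro ω A hA hanti
    classical
    have hcons : ∀ w ∈ A, w = w.headI :: w.tail := by
      intro w hw
      have hne := (hA w hw).1
      cases w with
      | nil => exact absurd rfl hne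
      | cons a l => simp
    have hmaps : ∀ w ∈ A, w.headI ∈ Finset.range (m (ω 0)) ∪ A.image List.headI :=
      fun w hw => Finset.mem_union_right _ (Finset.mem_image_of_mem _ hw)
    rw [← Finset.sum_fiberwise_of_maps_to hmaps]
    set b : ℕ → ℝ := fun j => if h : j < m (ω 0) then ρ (ω 0) ⟨j, h⟩ ^ s (ω 0) else 0
      with hb
    have hbnn : ∀ j, 0 ≤ b j := by
      intro j; rw [hb]; dsimp only; split
      · exact Real.rpow_nonneg (hρ _ _).le _
      · exact le_refl 0
    have hfiber : ∀ j ∈ Finset.range (m (ω 0)) ∪ A.image List.headI,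
        ∑ w ∈ A.filter (fun w => w.headI = j), wt m ρ s ω w ≤ b j := by
      intro j _
      set F := A.filter (fun w => w.headI = j) with hF
      have hFmem : ∀ w ∈ F, w ∈ A ∧ w = j :: w.tail := by
        intro w hw
        rw [hF, Finset.mem_filter] at hw
        exact ⟨hw.1, by conv_lhs => rw [hcons w hw.1, hw.2]⟩
      by_cases hj : j < m (ω 0)
      · have hwt : ∀ w ∈ F, wt m ρ s ω w
            = b j * wt m ρ s (fun n => ω (n+1)) w.tail := by
          intro w hw
          conv_lhs => rw [(hFmem w hw).2]
          simp only [wt, hb, dif_pos hj]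
        rw [Finset.sum_congr rfl hwt, ← Finset.mul_sum]
        by_cases hsing : [j] ∈ F
        · have hFs : F = {[j]} := by
            apply Finset.eq_singleton_iff_unique_mem.mpr
            refine ⟨hsing, ?_⟩
            intro w hw
            by_contra hne
            refine hanti [j] (hFmem _ hsing).1 w (hFmem w hw).1 (Ne.symm hne) ?_
            rw [(hFmem w hw).2]
            exact List.cons_prefix_cons.mpr ⟨rfl, List.nil_prefix⟩
          rw [hFs]
          simp only [Finset.sum_singleton, List.tail_cons, wt]
          simp [hbnn j]
        · have hinj : ∀ w ∈ F, ∀ v ∈ F, w.tail = v.tail → w = v := by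
            intro w hw v hv hwv
            rw [(hFmem w hw).2, (hFmem v hv).2, hwv]
          rw [← Finset.sum_image hinj]
          have h1 : ∑ v ∈ F.image List.tail, wt m ρ s (fun n => ω (n+1)) v ≤ 1 := by
            apply ih
            · intro v hv
              obtain ⟨w, hw, rfl⟩ := Finset.mem_image.mp hv
              constructor
              · intro hnil
                apply hsing
                have := (hFmem w hw).2
                rw [hnil] at this
                rwa [← this]
              · have := (hA w (hFmem w hw).1).2
                have hlw : w.tail.length + 1 = w.length := by
                  conv_rhs => rw [(hFmem w hw).2]
                  simp
                omega
            · intro v hv v' hv' hne hpre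
              obtain ⟨w, hw, rfl⟩ := Finset.mem_image.mp hv
              obtain ⟨w', hw', rfl⟩ := Finset.mem_image.mp hv'
              have hww' : w ≠ w' := fun h => hne (by rw [h])
              refine hanti w (hFmem w hw).1 w' (hFmem w' hw').1 hww' ?_
              rw [(hFmem w hw).2, (hFmem w' hw').2]
              exact List.cons_prefix_cons.mpr ⟨rfl, hpre⟩
          calc b j * ∑ v ∈ F.image List.tail, wt m ρ s (fun n => ω (n+1)) v
              ≤ b j * 1 := mul_le_mul_of_nonneg_left h1 (hbnn j)
            _ = b j := mul_one _
      · have hwt0 : ∀ w ∈ F, wt m ρ s ω w = 0 := by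
          intro w hw
          conv_lhs => rw [(hFmem w hw).2]
          simp only [wt, dif_neg hj, zero_mul]
        rw [Finset.sum_congr rfl hwt0]
        simp [hbnn j]
    calc ∑ j ∈ Finset.range (m (ω 0)) ∪ A.image List.headI,
          ∑ w ∈ A.filter (fun w => w.headI = j), wt m ρ s ω w
        ≤ ∑ j ∈ Finset.range (m (ω 0)) ∪ A.image List.headI, b j :=
          Finset.sum_le_sum hfiber
      _ = ∑ j ∈ Finset.range (m (ω 0)), b j := by
          refine (Finset.sum_subset Finset.subset_union_left ?_).symm
          intro j _ hj
          rw [Finset.mem_range] at hj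
          rw [hb]; exact dif_neg hj
      _ = ∑ j : Fin (m (ω 0)), ρ (ω 0) j ^ s (ω 0) := by
          rw [← Fin.sum_univ_eq_sum_range]
          refine Finset.sum_congr rfl fun i _ => ?_
          rw [hb]; dsimp only; rw [dif_pos i.isLt]
      _ = 1 := hs (ω 0)

end RIFSAux


lemma packingPre_empty {K : Type*} [MetricSpace K] (G : ℝ → ℝ) :
    packingPre G (∅ : Set K) = 0 := by
  refine le_antisymm ?_ (zero_le)
  unfold packingPre
  refine le_trans (iInf₂_le 1 one_pos) ?_
  refine iSup_le fun sset => iSup_le fun c => iSup_le fun r => iSup_le fun hpack =>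
    iSup_le fun _ => ?_
  haveI : IsEmpty ↥sset := ⟨fun n => Set.notMem_empty _ (hpack n.1 n.2).1⟩
  rw [tsum_empty]

/-- For a RIFS of contracting similarities on `ℝⁿ` satisfying the uniform open set
condition, `sup_ω 𝒫^{s_max}(F_ω) < ∞`; in particular `dim_P F_ω ≤ s_max` for all `ω`. -/
theorem packingMeasure_smax_bounded (n : ℕ) {N : ℕ} (hN : 0 < N)
    (m : Fin N → ℕ) (hm : ∀ i, 0 < m i)
    (S : ∀ i, Fin (m i) → EuclideanSpace ℝ (Fin n) → EuclideanSpace ℝ (Fin n))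
    (ρ : ∀ i, Fin (m i) → ℝ) (hρ : ∀ i j, 0 < ρ i j ∧ ρ i j < 1)
    (hsim : ∀ i j x y, dist (S i j x) (S i j y) = ρ i j * dist x y)
    (O : Set (EuclideanSpace ℝ (Fin n))) (hOne : O.Nonempty) (hOopen : IsOpen O)
    (hOsub : ∀ i j, S i j '' O ⊆ O)
    (hOdisj : ∀ i, Pairwise fun j j' : Fin (m i) => Disjoint (S i j '' O) (S i j' '' O))
    (K₀ : Set (EuclideanSpace ℝ (Fin n))) (hK₀c : IsCompact K₀) (hK₀ne : K₀.Nonempty)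
    (hK₀inv : ∀ i j, S i j '' K₀ ⊆ K₀)
    (s : Fin N → ℝ) (hs : ∀ i, ∑ j, ρ i j ^ s i = 1)
    (smax : ℝ) (hsmax : IsGreatest (Set.range s) smax) :
    (⨆ ω : ℕ → Fin N, packingMeasure (fun t => t ^ smax) (attractorOf m S K₀ ω)) < ⊤ ∧
      ∀ ω : ℕ → Fin N, packingDim (attractorOf m S K₀ ω) ≤ ENNReal.ofReal smax := by
  classical
  have hρ0 : ∀ i j, 0 < ρ i j := fun i j => (hρ i j).1
  -- min and max contraction ratios
  have hNe : (Finset.univ : Finset (Fin N)).Nonempty := ⟨⟨0, hN⟩, Finset.mem_univ _⟩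
  have hMe : ∀ i, (Finset.univ : Finset (Fin (m i))).Nonempty :=
    fun i => ⟨⟨0, hm i⟩, Finset.mem_univ _⟩
  set rmin : ℝ := Finset.univ.inf' hNe (fun i => Finset.univ.inf' (hMe i) (ρ i)) with hrmin
  set rmax : ℝ := Finset.univ.sup' hNe (fun i => Finset.univ.sup' (hMe i) (ρ i)) with hrmax
  have hrmin_le : ∀ i j, rmin ≤ ρ i j := fun i j =>
    le_trans (Finset.inf'_le _ (Finset.mem_univ i)) (Finset.inf'_le _ (Finset.mem_univ j))
  have hrmax_ge : ∀ i j, ρ i j ≤ rmax := fun i j =>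
    le_trans (Finset.le_sup' (ρ i) (Finset.mem_univ j))
      (Finset.le_sup' (fun i => Finset.univ.sup' (hMe i) (ρ i)) (Finset.mem_univ i))
  have hrmin0 : 0 < rmin := by
    rw [hrmin, Finset.lt_inf'_iff]
    intro i _
    rw [Finset.lt_inf'_iff]
    exact fun j _ => hρ0 i j
  have hrmax1 : rmax < 1 := by
    rw [hrmax, Finset.sup'_lt_iff]
    intro i _
    rw [Finset.sup'_lt_iff]
    exact fun j _ => (hρ i j).2
  have hrmin1 : rmin ≤ 1 :=
    le_trans (hrmin_le ⟨0, hN⟩ ⟨0, hm _⟩) (hρ _ _).2.le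
  have hrmax0 : 0 ≤ rmax := le_trans (hρ0 ⟨0, hN⟩ ⟨0, hm _⟩).le (hrmax_ge _ _)
  -- nonnegativity of exponents
  have hs_nonneg : ∀ i, 0 ≤ s i := by
    intro i
    by_contra h
    push_neg at h
    set j : Fin (m i) := ⟨0, hm i⟩
    have h1 : (1:ℝ) < ρ i j ^ s i :=
      (Real.one_lt_rpow_iff_of_pos (hρ0 i j)).mpr (Or.inr ⟨(hρ i j).2, h⟩)
    have h2 : ρ i j ^ s i ≤ ∑ j', ρ i j' ^ s i :=
      Finset.single_le_sum (fun j' _ => Real.rpow_nonneg (hρ0 i j').le _) (Finset.mem_univ j)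
    rw [hs i] at h2
    linarith
  obtain ⟨i₀, hi₀⟩ := hsmax.1
  have hsmax0 : 0 ≤ smax := hi₀ ▸ hs_nonneg i₀
  have hs_le : ∀ i, s i ≤ smax := fun i => hsmax.2 ⟨i, rfl⟩
  set D : ℝ := Metric.diam K₀ with hD
  have hD0 : 0 ≤ D := Metric.diam_nonneg
  -- the core estimate
  have hcore : ∀ u : ℝ, smax ≤ u → ∀ ω : ℕ → Fin N,
      packingMeasure (fun t => t ^ u) (attractorOf m S K₀ ω)
        ≤ ENNReal.ofReal ((rmin ^ u)⁻¹ * max 1 ((2*D) ^ u)) := by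
    intro u hu ω
    have hu0 : 0 ≤ u := hsmax0.trans hu
    have hs_le_u : ∀ i, s i ≤ u := fun i => (hs_le i).trans hu
    have hrminu : 0 < rmin ^ u := Real.rpow_pos_of_pos hrmin0 _
    set F : Set (EuclideanSpace ℝ (Fin n)) := attractorOf m S K₀ ω with hF
    set KK : ℝ := (rmin ^ u)⁻¹ * max 1 ((2*D) ^ u) with hKK
    -- reduce to the pre-measure
    have step1 : packingMeasure (fun t => t ^ u) F ≤ packingPre (fun t => t ^ u) F := by
      unfold packingMeasure
      set E : ℕ → Set (EuclideanSpace ℝ (Fin n)) := fun k => if k = 0 then F else ∅ with hE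
      have hcov : F ⊆ ⋃ k, E k := fun x hx => Set.mem_iUnion.mpr ⟨0, by simp [hE, hx]⟩
      refine le_trans (iInf₂_le E hcov) ?_
      rw [tsum_eq_single 0 (fun k hk => by simp [hE, if_neg hk, packingPre_empty])]
      simp [hE]
    refine step1.trans ?_
    unfold packingPre
    refine le_trans (iInf₂_le 1 one_pos) ?_
    refine iSup_le fun sset => iSup_le fun c => iSup_le fun r => iSup_le fun hpack =>
      iSup_le fun hdisj => ?_
    -- choose the words
    have hword : ∀ p ∈ sset, ∃ w : List ℕ, w ≠ [] ∧ RIFSAux.Valid m ω w ∧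
        c p ∈ RIFSAux.cyl m S K₀ ω w ∧
        RIFSAux.cyl m S K₀ ω w ⊆ Metric.closedBall (c p) (r p) ∧
        (2 * r p) ^ u ≤ KK * RIFSAux.wt m ρ s ω w := by
      intro p hp
      obtain ⟨hcF, hrp, hr1⟩ := hpack p hp
      have hk : ∃ k : ℕ, 1 ≤ k ∧ rmax ^ k * D ≤ r p := by
        rcases eq_or_lt_of_le hD0 with hDeq | hDpos
        · exact ⟨1, le_refl 1, by rw [← hDeq, mul_zero]; exact hrp.le⟩
        · obtain ⟨k, hkk⟩ := exists_pow_lt_of_lt_one (div_pos hrp hDpos) hrmax1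
          refine ⟨k + 1, Nat.le_add_left 1 k, ?_⟩
          have h2 : rmax ^ k * D < r p := (lt_div_iff₀ hDpos).mp hkk
          have h1 : rmax ^ (k+1) ≤ rmax ^ k :=
            pow_le_pow_of_le_one hrmax0 hrmax1.le (Nat.le_succ k)
          nlinarith [mul_le_mul_of_nonneg_right h1 hD0]
      obtain ⟨k, hk1, hkle⟩ := hk
      have hcl : c p ∈ levelSets m S K₀ ω k := by
        have h := hcF
        rw [hF] at h
        unfold attractorOf at h
        exact Set.mem_iInter.mp h k
      obtain ⟨w₀, hlen, hval, hmemc⟩ := RIFSAux.mem_cyl_of_mem_levelSets k ω (c p) hcl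
      have hP : ∃ t, 1 ≤ t ∧ RIFSAux.prd m ρ ω (w₀.take t) * D ≤ r p := by
        refine ⟨k, hk1, ?_⟩
        rw [← hlen, List.take_length]
        calc RIFSAux.prd m ρ ω w₀ * D ≤ rmax ^ w₀.length * D :=
              mul_le_mul_of_nonneg_right
                (RIFSAux.prd_le_pow hrmax0 hrmax_ge hρ0 w₀ ω hval) hD0
          _ ≤ r p := by rw [hlen]; exact hkle
      set t : ℕ := Nat.find hP with htdef
      obtain ⟨ht1, htle⟩ := Nat.find_spec hP
      set w : List ℕ := w₀.take t with hwdef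
      have hvalw : RIFSAux.Valid m ω w := RIFSAux.valid_take w₀ ω hval t
      have hlw : 0 < w.length := by
        rw [hwdef, List.length_take, hlen]
        omega
      have hwne : w ≠ [] := by
        intro hnil
        rw [hnil] at hlw
        simp at hlw
      have hmemw : c p ∈ RIFSAux.cyl m S K₀ ω w := by
        have h := RIFSAux.cyl_append hK₀inv (w₀.take t) (w₀.drop t) ω
        rw [List.take_append_drop] at h
        exact h hmemc
      have hball : RIFSAux.cyl m S K₀ ω w ⊆ Metric.closedBall (c p) (r p) := by
        intro y hy
        rw [Metric.mem_closedBall]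
        calc dist y (c p) ≤ Metric.diam (RIFSAux.cyl m S K₀ ω w) :=
              Metric.dist_le_diam_of_mem
                (hK₀c.isBounded.subset (RIFSAux.cyl_subset_K0 hK₀inv _ _)) hy hmemw
          _ ≤ RIFSAux.prd m ρ ω w * D := RIFSAux.diam_cyl_le hK₀c hK₀inv hρ0 hsim w ω hvalw
          _ ≤ r p := htle
      have hprd0 : 0 < RIFSAux.prd m ρ ω w := RIFSAux.prd_pos hρ0 w ω hvalw
      have hwtge : RIFSAux.prd m ρ ω w ^ u ≤ RIFSAux.wt m ρ s ω w :=
        RIFSAux.wt_ge_prd_rpow hρ hs_le_u w ω hvalw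
      have hwt0 : 0 ≤ RIFSAux.wt m ρ s ω w := RIFSAux.wt_nonneg hρ0 w ω
      have hmax1 : (1:ℝ) ≤ max 1 ((2*D)^u) := le_max_left _ _
      refine ⟨w, hwne, hvalw, hmemw, hball, ?_⟩
      rcases eq_or_lt_of_le ht1 with ht1' | ht2
      · -- t = 1
        have hrminle : rmin ≤ RIFSAux.prd m ρ ω w := by
          cases w₀ with
          | nil => simp at hlen; omega
          | cons j w₀' =>
            rw [← htdef] at ht1'
            rw [hwdef, ← ht1']
            simp only [List.take_succ_cons, List.take_zero]
            simp only [RIFSAux.prd, dif_pos hval.1, mul_one]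
            exact hrmin_le _ _
        have h1 : rmin ^ u ≤ RIFSAux.wt m ρ s ω w :=
          le_trans (Real.rpow_le_rpow hrmin0.le hrminle hu0) hwtge
        have h2 : (2 * r p) ^ u ≤ 1 := Real.rpow_le_one (by linarith) hr1 hu0
        rw [hKK]
        calc (2 * r p) ^ u ≤ 1 := h2
          _ = (rmin ^ u)⁻¹ * rmin ^ u := (inv_mul_cancel₀ hrminu.ne').symm
          _ ≤ (rmin ^ u)⁻¹ * (max 1 ((2*D)^u) * RIFSAux.wt m ρ s ω w) := by
              refine mul_le_mul_of_nonneg_left ?_ (inv_nonneg.mpr hrminu.le)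
              calc rmin ^ u ≤ RIFSAux.wt m ρ s ω w := h1
                _ = 1 * RIFSAux.wt m ρ s ω w := (one_mul _).symm
                _ ≤ max 1 ((2*D)^u) * RIFSAux.wt m ρ s ω w :=
                    mul_le_mul_of_nonneg_right hmax1 hwt0
          _ = (rmin ^ u)⁻¹ * max 1 ((2*D)^u) * RIFSAux.wt m ρ s ω w := by ring
      · -- 2 ≤ t
        have hmin : ¬ (1 ≤ t - 1 ∧ RIFSAux.prd m ρ ω (w₀.take (t-1)) * D ≤ r p) :=
          Nat.find_min hP (by omega)
        have hgt : r p < RIFSAux.prd m ρ ω (w₀.take (t-1)) * D := by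
          by_contra hc
          push_neg at hc
          exact hmin ⟨by omega, hc⟩
        have hstep : rmin * RIFSAux.prd m ρ ω (w₀.take (t-1)) ≤ RIFSAux.prd m ρ ω w := by
          have h := RIFSAux.prd_take_succ hrmin0 hrmin1 hrmin_le hρ0 w₀ ω hval (t-1)
          rwa [show t - 1 + 1 = t by omega] at h
        have hkey : rmin * r p < RIFSAux.prd m ρ ω w * D := by
          have h3 : rmin * (RIFSAux.prd m ρ ω (w₀.take (t-1)) * D)
              ≤ RIFSAux.prd m ρ ω w * D := by
            rw [← mul_assoc]
            exact mul_le_mul_of_nonneg_right hstep hD0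
          nlinarith
        have h4 : 2 * r p ≤ 2 * D * RIFSAux.prd m ρ ω w * rmin⁻¹ := by
          rw [mul_comm (2 * D * RIFSAux.prd m ρ ω w) rmin⁻¹, inv_mul_eq_div,
            le_div_iff₀ hrmin0]
          nlinarith
        have h5 : (2 * r p) ^ u ≤ (2 * D * RIFSAux.prd m ρ ω w * rmin⁻¹) ^ u :=
          Real.rpow_le_rpow (by linarith) h4 hu0
        have h6 : (2 * D * RIFSAux.prd m ρ ω w * rmin⁻¹) ^ u
            = (2*D)^u * RIFSAux.prd m ρ ω w ^ u * (rmin ^ u)⁻¹ := by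
          rw [Real.mul_rpow (mul_nonneg (by linarith) hprd0.le) (inv_nonneg.mpr hrmin0.le),
            Real.mul_rpow (by linarith) hprd0.le, Real.inv_rpow hrmin0.le]
        rw [hKK]
        calc (2 * r p) ^ u ≤ (2*D)^u * RIFSAux.prd m ρ ω w ^ u * (rmin ^ u)⁻¹ :=
              h5.trans_eq h6
          _ ≤ max 1 ((2*D)^u) * RIFSAux.wt m ρ s ω w * (rmin ^ u)⁻¹ := by
              refine mul_le_mul_of_nonneg_right ?_ (inv_nonneg.mpr hrminu.le)
              exact mul_le_mul (le_max_right _ _) hwtge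
                (Real.rpow_nonneg hprd0.le _) (le_trans zero_le_one hmax1)
          _ = (rmin ^ u)⁻¹ * max 1 ((2*D)^u) * RIFSAux.wt m ρ s ω w := by ring
    choose W hW using hword
    have hWanti : ∀ p : ↥sset, ∀ q : ↥sset, W p.1 p.2 <+: W q.1 q.2 → p = q := by
      intro p q hpre
      by_contra hne
      obtain ⟨v, hv⟩ := hpre
      have h1 : RIFSAux.cyl m S K₀ ω (W q.1 q.2) ⊆ RIFSAux.cyl m S K₀ ω (W p.1 p.2) := by
        rw [← hv]; exact RIFSAux.cyl_append hK₀inv _ _ _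
      obtain ⟨x, hx⟩ := RIFSAux.cyl_nonempty hK₀ne (W q.1 q.2) ω (hW q.1 q.2).2.1
      have hxq : x ∈ Metric.closedBall (c q.1) (r q.1) := (hW q.1 q.2).2.2.2.1 hx
      have hxp : x ∈ Metric.closedBall (c p.1) (r p.1) := (hW p.1 p.2).2.2.2.1 (h1 hx)
      have hne' : (p : ℕ) ≠ (q : ℕ) := fun h => hne (Subtype.ext h)
      exact Set.disjoint_left.mp (hdisj p.2 q.2 hne') hxp hxq
    -- the sum estimate
    rw [ENNReal.tsum_eq_iSup_sum]
    refine iSup_le fun Fs => ?_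
    have hterm_nn : ∀ p ∈ Fs, 0 ≤ (2 * r (p : ↥sset).1) ^ u :=
      fun p _ => Real.rpow_nonneg (by nlinarith [(hpack p.1 p.2).2.1]) _
    rw [← ENNReal.ofReal_sum_of_nonneg hterm_nn]
    refine ENNReal.ofReal_le_ofReal ?_
    set A : Finset (List ℕ) := Fs.image (fun p : ↥sset => W p.1 p.2) with hA
    have hWinj : ∀ p ∈ Fs, ∀ q ∈ Fs, W p.1 p.2 = W q.1 q.2 → p = q :=
      fun p _ q _ h => hWanti p q (h ▸ List.prefix_refl _)
    have hsum : ∑ w ∈ A, RIFSAux.wt m ρ s ω w ≤ 1 := by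
      refine RIFSAux.antichain_sum hρ0 hs (A.sup List.length) ω A ?_ ?_
      · intro w hw
        obtain ⟨p, hp, rfl⟩ := Finset.mem_image.mp hw
        exact ⟨(hW p.1 p.2).1, Finset.le_sup hw⟩
      · intro w hw v hv hne hpre
        obtain ⟨p, hp, rfl⟩ := Finset.mem_image.mp hw
        obtain ⟨q, hq, rfl⟩ := Finset.mem_image.mp hv
        have := hWanti p q hpre
        subst this
        exact hne rfl
    have hKK0 : 0 ≤ KK := by
      rw [hKK]
      have : (0:ℝ) ≤ max 1 ((2*D) ^ u) := le_trans zero_le_one (le_max_left _ _)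
      positivity
    calc ∑ p ∈ Fs, (2 * r (p : ↥sset).1) ^ u
        ≤ ∑ p ∈ Fs, KK * RIFSAux.wt m ρ s ω (W p.1 p.2) :=
          Finset.sum_le_sum fun p _ => (hW p.1 p.2).2.2.2.2
      _ = KK * ∑ p ∈ Fs, RIFSAux.wt m ρ s ω (W p.1 p.2) := by rw [Finset.mul_sum]
      _ = KK * ∑ w ∈ A, RIFSAux.wt m ρ s ω w := by rw [hA, Finset.sum_image hWinj]
      _ ≤ KK * 1 := mul_le_mul_of_nonneg_left hsum hKK0
      _ = KK := mul_one _
  constructor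
  · refine lt_of_le_of_lt (iSup_le fun ω => hcore smax le_rfl ω) ENNReal.ofReal_lt_top
  · intro ω
    unfold packingDim
    refine iSup_le fun t => iSup_le fun ht0 => iSup_le fun htop => ?_
    by_cases hts : t ≤ smax
    · exact ENNReal.ofReal_le_ofReal hts
    · have hle : smax ≤ t := (not_le.mp hts).le
      have := hcore t hle ω
      rw [htop] at this
      exact absurd this (not_le.mpr ENNReal.ofReal_lt_top)
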